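/- Let ρ : ℝⁿ → ℝ be continuous with support contained in the closed ball B(0, r/2), and suppose T > 2r > 0. If ∫₀ᵀ ρ(y + tω) dt = 0 for all unit vectors ω ∈ Sⁿ⁻¹ and all y ∈ ℝⁿ with r/2 < |y| < T - r/2, then ∫_ℝ ρ(y + tω) dt = 0 for all ω ∈ Sⁿ⁻¹ and all y ∈ ℝⁿ. -/

import Mathlib

open MeasureTheory intervalIntegral

set_option maxHeartbeats 1000000

theorem stmt18 {n : ℕ} (r T : ℝ) (hr : 0 < r) (hT : 2 * r < T)
    (ρ : EuclideanSpace ℝ (Fin n) → ℝ) (hρ : Continuous ρ)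
    (hsupp : Function.support ρ ⊆ Metric.closedBall 0 (r / 2))
    (h : ∀ ω : EuclideanSpace ℝ (Fin n), ‖ω‖ = 1 →
      ∀ y : EuclideanSpace ℝ (Fin n), r / 2 < ‖y‖ → ‖y‖ < T - r / 2 →
        (∫ t in (0 : ℝ)..T, ρ (y + t • ω)) = 0) :
    ∀ ω : EuclideanSpace ℝ (Fin n), ‖ω‖ = 1 →
      ∀ y : EuclideanSpace ℝ (Fin n), (∫ t : ℝ, ρ (y + t • ω)) = 0 := by
  intro ω hω y
  obtain ⟨a, ha⟩ : ∃ a : ℝ, a = inner ℝ y ω := ⟨_, rfl⟩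
  -- norm expansion
  have hnorm : ∀ z : EuclideanSpace ℝ (Fin n), ∀ t : ℝ,
      ‖z + t • ω‖ ^ 2 = ‖z‖ ^ 2 - (inner ℝ z ω : ℝ) ^ 2 + (t + inner ℝ z ω) ^ 2 := by
    intro z t
    have := norm_add_sq_real z (t • ω)
    rw [this, real_inner_smul_right, norm_smul, hω, Real.norm_eq_abs, mul_one, sq_abs]
    ring
  by_cases hd : ‖y‖ ^ 2 - a ^ 2 ≤ (r / 2) ^ 2
  · -- line meets the ball: translate base point
    obtain ⟨y', hy'⟩ : ∃ y' : EuclideanSpace ℝ (Fin n), y' = y + (-a - r) • ω := ⟨_, rfl⟩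
    have hay' : (inner ℝ y' ω : ℝ) = -r := by
      rw [hy', inner_add_left, inner_smul_left, real_inner_self_eq_norm_sq, hω]
      simp [← ha]
      ring
    have hny' : ‖y'‖ ^ 2 = ‖y‖ ^ 2 - a ^ 2 + r ^ 2 := by
      have := hnorm y (-a - r)
      rw [← hy', ← ha] at this
      nlinarith [this]
    have hCS : a ^ 2 ≤ ‖y‖ ^ 2 := by
      rw [ha]
      have h1 := abs_real_inner_le_norm y ω
      rw [hω, mul_one] at h1
      nlinarith [abs_nonneg (inner ℝ y ω : ℝ), sq_abs (inner ℝ y ω : ℝ)]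
    have hy'lb : r / 2 < ‖y'‖ := by
      nlinarith [norm_nonneg y']
    have hy'ub : ‖y'‖ < T - r / 2 := by
      nlinarith [norm_nonneg y']
    have key := h ω hω y' hy'lb hy'ub
    -- support of t ↦ ρ (y' + t • ω) is inside Ioc 0 T
    have hsub : ∀ t : ℝ, t ∉ Set.Ioc (0:ℝ) T → ρ (y' + t • ω) = 0 := by
      intro t ht
      by_contra hne
      have hmem := hsupp hne
      rw [Metric.mem_closedBall, dist_zero_right] at hmem
      have h1 : ‖y' + t • ω‖ ^ 2 ≤ (r / 2) ^ 2 := by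
        nlinarith [norm_nonneg (y' + t • ω)]
      have h2 := hnorm y' t
      rw [hay'] at h2
      have h3 : (t - r) ^ 2 ≤ (r / 2) ^ 2 := by nlinarith [hCS]
      have : t ∈ Set.Ioc (0:ℝ) T := by
        constructor <;> nlinarith
      exact ht this
    have heq1 : (∫ t : ℝ, ρ (y' + t • ω)) = ∫ t in (0:ℝ)..T, ρ (y' + t • ω) := by
      rw [intervalIntegral.integral_of_le (by linarith : (0:ℝ) ≤ T)]
      exact (setIntegral_eq_integral_of_forall_compl_eq_zero hsub).symm
    have h0 : ∀ t : ℝ, y + (t + (-a - r)) • ω = y' + t • ω := by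
      intro t
      rw [hy', add_smul]
      abel
    have heq2 : (∫ t : ℝ, ρ (y + t • ω)) = ∫ t : ℝ, ρ (y' + t • ω) :=
      calc (∫ t : ℝ, ρ (y + t • ω)) = ∫ t : ℝ, ρ (y + (t + (-a - r)) • ω) :=
            (integral_add_right_eq_self (fun t => ρ (y + t • ω)) (-a - r)).symm
        _ = ∫ t : ℝ, ρ (y' + t • ω) :=
            integral_congr_ae (Filter.Eventually.of_forall fun t => congrArg ρ (h0 t))
    rw [heq2, heq1, key]
  · -- line misses the ball: integrand vanishes
    push_neg at hd
    have : ∀ t : ℝ, ρ (y + t • ω) = 0 := by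
      intro t
      by_contra hne
      have hmem := hsupp hne
      rw [Metric.mem_closedBall, dist_zero_right] at hmem
      have h1 : ‖y + t • ω‖ ^ 2 ≤ (r / 2) ^ 2 := by
        nlinarith [norm_nonneg (y + t • ω)]
      have h2 := hnorm y t
      rw [← ha] at h2
      nlinarith [sq_nonneg (t + a)]
    simp only [this]
    exact MeasureTheory.integral_zero ℝ ℝ
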